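/- arXiv:2004.01080 — 5 statements merged into one kernel-verified Lean document; each statement's English description precedes it below -/
import Mathlib

section
/- The set A_3 = {π(3k) : k ∈ ℤ⁺} equals {m ∈ ℤ⁺ : m ≥ 2}, i.e., every integer m ≥ 2 is of the form π(3k) for some positive integer k. -/
open Nat

lemma pc_count (n : ℕ) : Nat.primeCounting n = Nat.count Nat.Prime (n + 1) := rfl

lemma pc_step (k : ℕ) (hk : 1 ≤ k) :
    Nat.primeCounting (3 * (k + 1)) ≤ Nat.primeCounting (3 * k) + 1 := by
  have h3 : ¬ Nat.Prime (3 * k + 3) := by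
    have : 3 * k + 3 = 3 * (k + 1) := by ring
    rw [this]
    exact Nat.not_prime_mul (by norm_num) (by omega)
  have h12 : ¬ Nat.Prime (3 * k + 1) ∨ ¬ Nat.Prime (3 * k + 2) := by
    rcases Nat.even_or_odd k with ⟨j, hj⟩ | ⟨j, hj⟩
    · right
      have : 3 * k + 2 = 2 * (3 * j + 1) := by omega
      rw [this]
      exact Nat.not_prime_mul (by norm_num) (by omega)
    · left
      have : 3 * k + 1 = 2 * (3 * j + 2) := by omega
      rw [this]
      exact Nat.not_prime_mul (by norm_num) (by omega)
  have e : 3 * (k + 1) + 1 = (3 * k + 1) + 1 + 1 + 1 := by ring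
  rw [pc_count, pc_count, e, Nat.count_succ, Nat.count_succ, Nat.count_succ]
  rcases h12 with h | h <;> simp [h, h3] <;> split <;> omega

lemma pc_unbounded (m : ℕ) : ∃ k : ℕ, 1 ≤ k ∧ m ≤ Nat.primeCounting (3 * k) := by
  induction m with
  | zero => exact ⟨1, le_refl 1, Nat.zero_le _⟩
  | succ m ih =>
    obtain ⟨k, hk1, hk⟩ := ih
    obtain ⟨p, hp_ge, hp⟩ := Nat.exists_infinite_primes (3 * k + 1)
    refine ⟨p, hp.one_lt.le.trans' (by norm_num), ?_⟩
    have h1 : m + 1 ≤ Nat.primeCounting p := by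
      rw [pc_count, Nat.count_succ, if_pos hp]
      have := Nat.count_monotone Nat.Prime hp_ge
      rw [pc_count] at hk
      omega
    exact h1.trans (Nat.monotone_primeCounting (by omega))

lemma pc_three : Nat.primeCounting 3 = 2 := by
  rw [pc_count]
  decide

theorem stmt_1 :
    {m : ℕ | ∃ k : ℕ, 0 < k ∧ Nat.primeCounting (3 * k) = m} = {m : ℕ | 2 ≤ m} := by
  ext m
  simp only [Set.mem_setOf_eq]
  constructor
  · rintro ⟨k, hk, rfl⟩
    have : Nat.primeCounting 3 ≤ Nat.primeCounting (3 * k) :=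
      Nat.monotone_primeCounting (by omega)
    rw [pc_three] at this; exact this
  · intro hm
    have hne : ∃ n : ℕ, m ≤ Nat.primeCounting (3 * (n + 1)) := by
      obtain ⟨k, hk1, hk⟩ := pc_unbounded m
      obtain ⟨j, rfl⟩ := Nat.exists_eq_add_of_le hk1
      exact ⟨j, by rwa [Nat.add_comm] at hk⟩
    classical
    let n := Nat.find hne
    have h1 : m ≤ Nat.primeCounting (3 * (n + 1)) := Nat.find_spec hne
    refine ⟨n + 1, Nat.succ_pos n, le_antisymm ?_ h1⟩
    match hn : n with
    | 0 =>
      have : (3 : ℕ) * (0 + 1) = 3 := by norm_num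
      rw [this, pc_three]; exact hm
    | j + 1 =>
      have hmin : ¬ m ≤ Nat.primeCounting (3 * (j + 1)) := by
        have := Nat.find_min hne (m := j) (by omega)
        exact this
      have := pc_step (j + 1) (by omega)
      omega
end

section
/- For any positive integer n and integer K ≥ 3, with X = π(Kn), the number of positive integers a ≤ X not lying in A_n equals the sum over 1 ≤ k ≤ K with π(kn) − π(kn−n) ≥ 2 of (π(kn) − π(kn−n) − 1). -/
open Classical in
private lemma auxSum (g : ℕ → ℕ) (hg : Monotone g) (K : ℕ) :
    ∑ k ∈ Finset.Icc 1 K, (g k - g (k-1) - 1)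
      + ((Finset.Icc 1 K).filter (fun k => g (k-1) < g k)).card = g K - g 0 := by
  induction K with
  | zero => simp
  | succ K ih =>
    have hins : Finset.Icc 1 (K+1) = insert (K+1) (Finset.Icc 1 K) := by
      ext x; simp [Finset.mem_Icc]; omega
    rw [hins, Finset.sum_insert (by simp), Finset.filter_insert]
    have h0K : g 0 ≤ g K := hg (Nat.zero_le K)
    have hKK : g K ≤ g (K+1) := hg (by omega)
    by_cases h : g ((K+1)-1) < g (K+1)
    · rw [if_pos h, Finset.card_insert_of_notMem (by simp)]
      simp only [Nat.add_sub_cancel] at h ⊢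
      omega
    · rw [if_neg h]
      simp only [Nat.add_sub_cancel] at h ⊢
      omega

open Classical in
private lemma auxSet (g : ℕ → ℕ) (hg : Monotone g) (h0 : g 0 = 0) (K : ℕ) :
    (Finset.Icc 1 (g K)).filter (fun a => ∃ k : ℕ, 0 < k ∧ g k = a)
      = ((Finset.Icc 1 K).filter (fun k => g (k-1) < g k)).image g := by
  ext a
  simp only [Finset.mem_filter, Finset.mem_image, Finset.mem_Icc]
  constructor
  · rintro ⟨⟨ha1, haK⟩, k, hk0, hk⟩
    have hex : ∃ m, a ≤ g m := ⟨k, hk.ge⟩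
    set k' := Nat.find hex with hk'def
    have h1 : a ≤ g k' := Nat.find_spec hex
    have hk'k : k' ≤ k := Nat.find_min' hex hk.ge
    have hk'K : k' ≤ K := Nat.find_min' hex haK
    have hk'1 : 1 ≤ k' := by
      by_contra hc
      push_neg at hc
      interval_cases k'
      · omega
    have h2 : g k' ≤ a := hk ▸ hg hk'k
    have h3 : ¬ a ≤ g (k' - 1) := Nat.find_min hex (by omega)
    exact ⟨k', ⟨⟨hk'1, hk'K⟩, by omega⟩, by omega⟩
  · rintro ⟨k, ⟨⟨hk1, hkK⟩, hlt⟩, rfl⟩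
    refine ⟨⟨by omega, hg hkK⟩, k, hk1, rfl⟩

open Classical in
theorem stmt_3 (n K : ℕ) (hn : 0 < n) (hK : 3 ≤ K) :
    ((Finset.Icc 1 (Nat.primeCounting (K * n))).filter
        (fun a => a ∉ {m : ℕ | ∃ k : ℕ, 0 < k ∧ Nat.primeCounting (k * n) = m})).card =
      ∑ k ∈ (Finset.Icc 1 K).filter
          (fun k => 2 ≤ Nat.primeCounting (k * n) - Nat.primeCounting (k * n - n)),
        (Nat.primeCounting (k * n) - Nat.primeCounting (k * n - n) - 1) := by
  set g : ℕ → ℕ := fun k => Nat.primeCounting (k * n) with hgdef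
  have hg : Monotone g := fun a b h =>
    Nat.monotone_primeCounting (Nat.mul_le_mul_right n h)
  have h0 : g 0 = 0 := by simp [hgdef, Nat.primeCounting_zero]
  have hsub : ∀ k : ℕ, Nat.primeCounting (k * n - n) = g (k - 1) := by
    intro k
    simp only [hgdef, Nat.sub_one_mul]
  -- RHS rewriting
  have hR : ∑ k ∈ (Finset.Icc 1 K).filter
          (fun k => 2 ≤ Nat.primeCounting (k * n) - Nat.primeCounting (k * n - n)),
        (Nat.primeCounting (k * n) - Nat.primeCounting (k * n - n) - 1)
      = ∑ k ∈ Finset.Icc 1 K, (g k - g (k-1) - 1) := by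
    rw [Finset.sum_filter]
    refine Finset.sum_congr rfl fun k _ => ?_
    rw [hsub k]
    by_cases h : 2 ≤ g k - g (k - 1)
    · rw [if_pos h]
    · rw [if_neg h]; omega
  set T := (Finset.Icc 1 K).filter (fun k => g (k-1) < g k) with hTdef
  have hSum := auxSum g hg K
  rw [h0, Nat.sub_zero, ← hTdef] at hSum
  -- LHS
  have hInj : Set.InjOn g ↑T := by
    intro k1 hk1 k2 hk2 he
    simp only [hTdef, Finset.coe_filter, Set.mem_setOf_eq, Finset.mem_Icc] at hk1 hk2
    by_contra hne
    rcases Nat.lt_or_ge k1 k2 with h | h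
    · have : g k1 ≤ g (k2 - 1) := hg (by omega)
      omega
    · have h' : k2 < k1 := by omega
      have : g k2 ≤ g (k1 - 1) := hg (by omega)
      omega
  have hcard : ((Finset.Icc 1 (g K)).filter
      (fun a => ∃ k : ℕ, 0 < k ∧ g k = a)).card = T.card := by
    rw [auxSet g hg h0 K, Finset.card_image_of_injOn hInj]
  have hne : ((Finset.Icc 1 (Nat.primeCounting (K * n))).filter
      (fun a => a ∉ {m : ℕ | ∃ k : ℕ, 0 < k ∧ Nat.primeCounting (k * n) = m}))
      = Finset.Icc 1 (g K) \
        ((Finset.Icc 1 (g K)).filter (fun a => ∃ k : ℕ, 0 < k ∧ g k = a)) := by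
    ext a
    simp only [Finset.mem_filter, Finset.mem_sdiff, Set.mem_setOf_eq, hgdef]
    constructor
    · rintro ⟨h1, h2⟩
      exact ⟨h1, fun h3 => h2 h3.2⟩
    · rintro ⟨h1, h2⟩
      exact ⟨h1, fun h3 => h2 ⟨h1, h3⟩⟩
  rw [hR, hne, Finset.card_sdiff_of_subset (Finset.filter_subset _ _), Nat.card_Icc, hcard]
  omega
end

section
/- For any positive integer n and integer K ≥ 3, |A_n^c(X)| ≤ n·|K_set|, where X = π(Kn), A_n^c(X) is the set of positive integers a ≤ X not in A_n, and K_set = {1 ≤ k ≤ K : π(kn) − π(kn−n) ≥ 2}. -/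
lemma count_prime_add_le (a b : ℕ) :
    Nat.count Nat.Prime (a + b) ≤ Nat.count Nat.Prime a + b := by
  induction b with
  | zero => simp
  | succ b ih =>
    rw [← Nat.add_assoc, Nat.count_succ]
    split <;> omega

lemma pi_sub_le (m n : ℕ) (h : n ≤ m) :
    Nat.primeCounting m ≤ Nat.primeCounting (m - n) + n := by
  unfold Nat.primeCounting Nat.primeCounting'
  calc Nat.count Nat.Prime (m + 1) = Nat.count Nat.Prime ((m - n + 1) + n) := by
        congr 1; omega
    _ ≤ Nat.count Nat.Prime (m - n + 1) + n := count_prime_add_le _ _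

open Classical in
theorem stmt_4 (n K : ℕ) (hn : 0 < n) (hK : 3 ≤ K) :
    ((Finset.Icc 1 (Nat.primeCounting (K * n))).filter
        (fun a => a ∉ {m : ℕ | ∃ k : ℕ, 0 < k ∧ Nat.primeCounting (k * n) = m})).card ≤
      n * ((Finset.Icc 1 K).filter
          (fun k => 2 ≤ Nat.primeCounting (k * n) - Nat.primeCounting (k * n - n))).card := by
  set f : ℕ → ℕ := fun a => sInf {k | a ≤ Nat.primeCounting (k * n)} with hf
  have key : ∀ a ∈ (Finset.Icc 1 (Nat.primeCounting (K * n))).filter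
      (fun a => a ∉ {m : ℕ | ∃ k : ℕ, 0 < k ∧ Nat.primeCounting (k * n) = m}),
      1 ≤ f a ∧ f a ≤ K ∧ Nat.primeCounting (f a * n - n) < a ∧ a < Nat.primeCounting (f a * n) := by
    intro a ha
    rw [Finset.mem_filter, Finset.mem_Icc] at ha
    obtain ⟨⟨ha1, haK⟩, hnot⟩ := ha
    have hne : {k | a ≤ Nat.primeCounting (k * n)}.Nonempty := ⟨K, haK⟩
    have hmem : a ≤ Nat.primeCounting (f a * n) := Nat.sInf_mem hne
    have hKle : f a ≤ K := Nat.sInf_le haK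
    have h1 : 1 ≤ f a := by
      rcases Nat.eq_zero_or_pos (f a) with h | h
      · exfalso; rw [h] at hmem; simp [Nat.primeCounting_zero] at hmem; omega
      · exact h
    have hlt : a < Nat.primeCounting (f a * n) := by
      rcases lt_or_eq_of_le hmem with h | h
      · exact h
      · exact absurd ⟨f a, h1, h.symm⟩ hnot
    have hprev : ¬ a ≤ Nat.primeCounting ((f a - 1) * n) := by
      intro hc
      have hle : f a ≤ f a - 1 := Nat.sInf_le hc
      omega
    have heq : (f a - 1) * n = f a * n - n := by
      rw [Nat.sub_mul, one_mul]
    rw [heq] at hprev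
    exact ⟨h1, hKle, by omega, hlt⟩
  apply Finset.card_le_mul_card_image_of_maps_to (f := f)
  · intro a ha
    obtain ⟨h1, h2, h3, h4⟩ := key a ha
    rw [Finset.mem_filter, Finset.mem_Icc]
    exact ⟨⟨h1, h2⟩, by omega⟩
  · intro b hb
    calc (((Finset.Icc 1 (Nat.primeCounting (K * n))).filter
        (fun a => a ∉ {m : ℕ | ∃ k : ℕ, 0 < k ∧ Nat.primeCounting (k * n) = m})).filter
        (fun x => f x = b)).card
        ≤ (Finset.Ioc (Nat.primeCounting (b * n - n)) (Nat.primeCounting (b * n))).card := by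
          apply Finset.card_le_card
          intro a ha
          rw [Finset.mem_filter] at ha
          obtain ⟨has, hfb⟩ := ha
          obtain ⟨h1, h2, h3, h4⟩ := key a has
          rw [hfb] at h3 h4
          rw [Finset.mem_Ioc]
          omega
      _ ≤ n := by
          rw [Nat.card_Ioc]
          rw [Finset.mem_filter, Finset.mem_Icc] at hb
          have := pi_sub_le (b * n) n (by nlinarith [hb.1.1])
          omega
end

section
/- The number of positive integers up to X that are products of at most two primes (with multiplicity) is ≫ (X / log X) · log log X for X large, and in particular (count)/(X/log X) → ∞ as X → ∞. -/
open Finset Filter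

set_option maxHeartbeats 1000000



lemma primesBelow_mono : Monotone Nat.primesBelow := by
  intro a b hab p hp
  rw [Nat.mem_primesBelow] at *
  exact ⟨hp.1.trans_le hab, hp.2⟩

lemma cheb_nat (M : ℕ) (hM : 2 ≤ M) :
    4 ^ (M / 2) ≤ M ^ ((M + 1).primesBelow.card + 1) := by
  set n := M / 2 with hn
  have hn1 : 1 ≤ n := (Nat.one_le_div_iff (by norm_num)).2 hM
  have h2n : 2 * n ≤ M := Nat.mul_div_le M 2 |>.trans_eq rfl |> (fun h => by omega)
  have hCB : n.centralBinom ≤ M ^ (M + 1).primesBelow.card := by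
    have hfac := Nat.factorization_prod_pow_eq_self (Nat.centralBinom_ne_zero n)
    have hsub : n.centralBinom.primeFactors ⊆ (M + 1).primesBelow := by
      intro p hp
      have hpp : p.Prime := Nat.prime_of_mem_primeFactors hp
      have hple : p ≤ 2 * n := by
        have := Nat.pow_factorization_choose_le (p := p) (n := 2 * n) (k := n)
          (by omega)
        rw [← Nat.centralBinom] at this
        calc p = p ^ 1 := (pow_one p).symm
          _ ≤ p ^ (n.centralBinom.factorization p) := by
              apply Nat.pow_le_pow_right hpp.pos
              have : n.centralBinom.factorization p ≠ 0 := by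
                rw [← Finsupp.mem_support_iff, Nat.support_factorization]
                exact hp
              omega
          _ ≤ 2 * n := this
      exact Nat.mem_primesBelow.2 ⟨by omega, hpp⟩
    calc n.centralBinom
        = ∏ p ∈ n.centralBinom.primeFactors, p ^ (n.centralBinom.factorization p) := by
          conv_lhs => rw [← hfac]
          rfl
      _ ≤ ∏ _p ∈ n.centralBinom.primeFactors, M := by
          apply Finset.prod_le_prod' 
          intro p hp
          have := Nat.pow_factorization_choose_le (p := p) (n := 2 * n) (k := n) (by omega)
          rw [← Nat.centralBinom] at this
          omega
      _ = M ^ n.centralBinom.primeFactors.card := by rw [Finset.prod_const]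
      _ ≤ M ^ (M + 1).primesBelow.card :=
          Nat.pow_le_pow_right (by omega) (Finset.card_le_card hsub)
  calc 4 ^ n ≤ 2 * n * n.centralBinom := Nat.four_pow_le_two_mul_self_mul_centralBinom n hn1
    _ ≤ M * M ^ (M + 1).primesBelow.card := Nat.mul_le_mul h2n hCB
    _ = M ^ ((M + 1).primesBelow.card + 1) := by ring

lemma cheb_real (M : ℕ) (hM : 2 ≤ M) :
    (M : ℝ) * Real.log 2 / Real.log M - 3 ≤ ((M + 1).primesBelow.card : ℝ) := by
  have hlogM : 0 < Real.log M := Real.log_pos (by exact_mod_cast hM)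
  set π : ℕ := (M + 1).primesBelow.card
  have h1 : ((M : ℝ) / 2 - 1) * Real.log 4 ≤ ((π : ℝ) + 1) * Real.log M := by
    have hnat := cheb_nat M hM
    have hr : ((4 : ℝ)) ^ (M / 2 : ℕ) ≤ (M : ℝ) ^ (π + 1) := by exact_mod_cast hnat
    have hlog := Real.log_le_log (by positivity) hr
    rw [Real.log_pow, Real.log_pow] at hlog
    push_cast at hlog
    refine le_trans ?_ hlog
    have hd : (M : ℝ) / 2 - 1 ≤ ((M / 2 : ℕ) : ℝ) := by
      have h2 : M < (M / 2 + 1) * 2 := by omega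
      have := (Nat.cast_lt (α := ℝ)).2 h2
      push_cast at this
      linarith
    have hlog4 : 0 ≤ Real.log 4 := Real.log_nonneg (by norm_num)
    nlinarith
  have hlog4 : Real.log 4 = 2 * Real.log 2 := by
    rw [show (4:ℝ) = 2 ^ 2 by norm_num, Real.log_pow]; push_cast; ring
  have hlog2M : Real.log 2 ≤ Real.log M := Real.log_le_log (by norm_num) (by exact_mod_cast hM)
  rw [hlog4] at h1
  rw [sub_le_iff_le_add, div_le_iff₀ hlogM]
  have hlog2 : 0 < Real.log 2 := Real.log_pos (by norm_num)
  nlinarith [hlog2.le, hlogM.le]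


lemma sum_inv_le_prod (N : ℕ) :
    ∑ n ∈ Finset.Icc 1 N, (1 / n : ℝ) ≤
      ∏ p ∈ (N + 1).primesBelow, (1 - 1 / (p : ℝ))⁻¹ := by
  classical
  set P := (N + 1).primesBelow with hP
  set t : ℕ → Finset ℕ := fun _ => Finset.range (N + 1) with ht
  set F : ((a : ℕ) → a ∈ P → ℕ) → ℝ :=
    fun g => ∏ p ∈ P.attach, (1 / (p.1 : ℝ)) ^ (g p.1 p.2) with hF
  set φ : ℕ → ((a : ℕ) → a ∈ P → ℕ) := fun n => fun p _ => n.factorization p with hφ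
  have hprod_eq : ∀ n ∈ Finset.Icc 1 N, (∏ p ∈ P, (p : ℕ) ^ (n.factorization p)) = n := by
    intro n hn
    rw [Finset.mem_Icc] at hn
    have hn0 : n ≠ 0 := by omega
    have hsupp : n.factorization.support ⊆ P := by
      rw [Nat.support_factorization]
      intro p hp
      have hpp := Nat.prime_of_mem_primeFactors hp
      have : p ≤ n := Nat.le_of_dvd (by omega) (Nat.dvd_of_mem_primeFactors hp)
      exact Nat.mem_primesBelow.2 ⟨by omega, hpp⟩
    rw [← Finsupp.prod_of_support_subset n.factorization hsupp _ (fun i _ => pow_zero i)]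
    exact Nat.factorization_prod_pow_eq_self hn0
  have hFφ : ∀ n ∈ Finset.Icc 1 N, F (φ n) = 1 / n := by
    intro n hn
    have h1 : F (φ n) = ∏ p ∈ P, (1 / (p : ℝ)) ^ (n.factorization p) := by
      rw [hF]
      exact Finset.prod_attach P fun p => (1 / (p : ℝ)) ^ (n.factorization p)
    rw [h1]
    have : ∏ p ∈ P, (1 / (p : ℝ)) ^ (n.factorization p)
        = (∏ p ∈ P, (p : ℝ) ^ (n.factorization p))⁻¹ := by
      rw [← Finset.prod_inv_distrib]
      exact Finset.prod_congr rfl fun p _ => by rw [one_div, inv_pow]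
    rw [this]
    have hcast : ((∏ p ∈ P, p ^ n.factorization p : ℕ) : ℝ)
        = ∏ p ∈ P, (p : ℝ) ^ (n.factorization p) := by push_cast; rfl
    rw [← hcast, hprod_eq n hn, one_div]
  have hinj : ∀ x ∈ Finset.Icc 1 N, ∀ y ∈ Finset.Icc 1 N, φ x = φ y → x = y := by
    intro x hx y hy hxy
    have : ∀ p ∈ P, x.factorization p = y.factorization p := by
      intro p hp
      exact congrFun (congrFun hxy p) hp
    calc x = ∏ p ∈ P, (p : ℕ) ^ (x.factorization p) := (hprod_eq x hx).symm
      _ = ∏ p ∈ P, (p : ℕ) ^ (y.factorization p) :=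
          Finset.prod_congr rfl fun p hp => by rw [this p hp]
      _ = y := hprod_eq y hy
  have himg : (Finset.Icc 1 N).image φ ⊆ P.pi t := by
    intro g hg
    rw [Finset.mem_image] at hg
    obtain ⟨n, hn, rfl⟩ := hg
    rw [Finset.mem_Icc] at hn
    rw [Finset.mem_pi]
    intro p hp
    simp only [hφ, ht, Finset.mem_range]
    have := Nat.factorization_lt p (show n ≠ 0 by omega)
    omega
  have hFnonneg : ∀ g, 0 ≤ F g := by
    intro g
    apply Finset.prod_nonneg
    intro p _
    positivity
  calc ∑ n ∈ Finset.Icc 1 N, (1 / n : ℝ)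
      = ∑ n ∈ Finset.Icc 1 N, F (φ n) :=
        (Finset.sum_congr rfl fun n hn => (hFφ n hn).symm)
    _ = ∑ g ∈ (Finset.Icc 1 N).image φ, F g := (Finset.sum_image hinj).symm
    _ ≤ ∑ g ∈ P.pi t, F g :=
        Finset.sum_le_sum_of_subset_of_nonneg himg fun g _ _ => hFnonneg g
    _ = ∏ p ∈ P, ∑ k ∈ Finset.range (N + 1), (1 / (p : ℝ)) ^ k :=
        (Finset.prod_sum P t fun p k => (1 / (p : ℝ)) ^ k).symm
    _ ≤ ∏ p ∈ P, (1 - 1 / (p : ℝ))⁻¹ := by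
        apply Finset.prod_le_prod
        · intro p _
          apply Finset.sum_nonneg
          intro k _
          positivity
        · intro p hp
          have hp2 : 2 ≤ p := (Nat.mem_primesBelow.1 hp).2.two_le
          have hx0 : (0:ℝ) ≤ 1 / p := by positivity
          have hx1 : (1:ℝ) / p < 1 := by
            rw [div_lt_one (by exact_mod_cast Nat.lt_of_lt_of_le Nat.zero_lt_two hp2)]
            exact_mod_cast hp2
          calc ∑ k ∈ Finset.range (N + 1), (1 / (p : ℝ)) ^ k
              ≤ ∑' k : ℕ, (1 / (p : ℝ)) ^ k :=
                (summable_geometric_of_lt_one hx0 hx1).sum_le_tsum _ (fun k _ => by positivity)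
            _ = (1 - 1 / (p : ℝ))⁻¹ := tsum_geometric_of_lt_one hx0 hx1

lemma tele (N : ℕ) (hN : 1 ≤ N) :
    ∑ n ∈ Finset.Icc 2 N, (1 / ((n : ℝ) - 1) - 1 / n) = 1 - 1 / N := by
  induction N with
  | zero => omega
  | succ m ih =>
    rcases Nat.lt_or_ge m 1 with hm | hm
    · interval_cases m
      · simp
    · rw [Finset.sum_Icc_succ_top (by omega : 2 ≤ m + 1), ih hm]
      have hm0 : (m : ℝ) ≥ 1 := by exact_mod_cast hm
      push_cast
      have : (m : ℝ) + 1 - 1 = m := by ring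
      rw [this]
      field_simp
      ring
lemma prod_le_exp (N : ℕ) (hN : 1 ≤ N) :
    ∏ p ∈ (N + 1).primesBelow, (1 - 1 / (p : ℝ))⁻¹ ≤
      Real.exp ((∑ p ∈ (N + 1).primesBelow, (1 / p : ℝ)) + 1) := by
  set P := (N + 1).primesBelow with hP
  have hple : ∀ p ∈ P, (1 - 1 / (p : ℝ))⁻¹ ≤ Real.exp (1 / ((p : ℝ) - 1)) := by
    intro p hp
    have hp2 : 2 ≤ p := (Nat.mem_primesBelow.1 hp).2.two_le
    have hp2' : (2 : ℝ) ≤ p := by exact_mod_cast hp2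
    have h1 : (1 - 1 / (p : ℝ))⁻¹ = 1 / ((p : ℝ) - 1) + 1 := by
      rw [show 1 - 1 / (p : ℝ) = ((p : ℝ) - 1) / p by field_simp, inv_div]
      have hne : (p:ℝ) - 1 ≠ 0 := by linarith
      field_simp
      ring
    rw [h1]
    exact Real.add_one_le_exp _
  calc ∏ p ∈ P, (1 - 1 / (p : ℝ))⁻¹
      ≤ ∏ p ∈ P, Real.exp (1 / ((p : ℝ) - 1)) := by
        apply Finset.prod_le_prod _ hple
        intro p hp
        have hp2 : 2 ≤ p := (Nat.mem_primesBelow.1 hp).2.two_le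
        have hp2' : (2 : ℝ) ≤ p := by exact_mod_cast hp2
        have : (0:ℝ) < 1 - 1 / (p : ℝ) := by
          rw [sub_pos, div_lt_one (by linarith)]; linarith
        positivity
    _ = Real.exp (∑ p ∈ P, 1 / ((p : ℝ) - 1)) := (Real.exp_sum _ _).symm
    _ ≤ Real.exp ((∑ p ∈ P, (1 / p : ℝ)) + 1) := by
        apply Real.exp_le_exp.2
        have hsplit : ∀ p ∈ P, 1 / ((p : ℝ) - 1) = 1 / p + (1 / ((p : ℝ) - 1) - 1 / p) := by
          intro p _; ring
        rw [Finset.sum_congr rfl hsplit, Finset.sum_add_distrib]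
        gcongr
        have hsub : P ⊆ Finset.Icc 2 N := by
          intro p hp
          rw [Nat.mem_primesBelow] at hp
          exact Finset.mem_Icc.2 ⟨hp.2.two_le, by omega⟩
        calc ∑ p ∈ P, (1 / ((p : ℝ) - 1) - 1 / p)
            ≤ ∑ n ∈ Finset.Icc 2 N, (1 / ((n : ℝ) - 1) - 1 / n) := by
              apply Finset.sum_le_sum_of_subset_of_nonneg hsub
              intro n hn _
              have h2 : 2 ≤ n := (Finset.mem_Icc.1 hn).1
              have h2' : (2 : ℝ) ≤ n := by exact_mod_cast h2
              have ha : (0:ℝ) < (n : ℝ) - 1 := by linarith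
              have hb : (n : ℝ) - 1 ≤ n := by linarith
              have := one_div_le_one_div_of_le ha hb
              linarith
          _ = 1 - 1 / N := tele N hN
          _ ≤ 1 := by
              have : (0:ℝ) < N := by exact_mod_cast hN
              have : (0:ℝ) ≤ 1 / (N:ℝ) := by positivity
              linarith

lemma mertens (N : ℕ) (hN : 2 ≤ N) :
    Real.log (Real.log N) - 1 ≤ ∑ p ∈ (N + 1).primesBelow, (1 / p : ℝ) := by
  set S := ∑ p ∈ (N + 1).primesBelow, (1 / p : ℝ) with hS
  set H := ∑ n ∈ Finset.Icc 1 N, (1 / n : ℝ) with hH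
  have hlogN : 0 < Real.log N := Real.log_pos (by exact_mod_cast hN)
  have h1 : Real.log N ≤ H := by
    have := log_add_one_le_harmonic N
    have heq : ((harmonic N : ℚ) : ℝ) = H := by
      rw [harmonic_eq_sum_Icc, hH]
      push_cast
      exact Finset.sum_congr rfl fun n _ => (one_div _).symm
    calc Real.log N ≤ Real.log (N + 1) := by
          apply Real.log_le_log (by positivity)
          · push_cast; linarith
      _ ≤ H := by rw [← heq]; exact_mod_cast this
  have h2 : H ≤ Real.exp (S + 1) :=
    (sum_inv_le_prod N).trans (prod_le_exp N (by omega))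
  have := Real.log_le_log (lt_of_lt_of_le hlogN h1) h2
  rw [Real.log_exp] at this
  have h3 := Real.log_le_log hlogN h1
  linarith [h3.trans this]


lemma count_lower (X y : ℕ) :
    ∑ p ∈ (y + 1).primesBelow, (((X / p + 1).primesBelow.filter (fun q => p < q)).card)
      ≤ (((Finset.Icc 1 X).filter (fun a => a.primeFactorsList.length ≤ 2)).card) := by
  classical
  rw [← Finset.card_sigma]
  apply Finset.card_le_card_of_injOn (fun pq => pq.1 * pq.2)
  · rintro ⟨p, q⟩ hpq
    rw [Finset.mem_coe, Finset.mem_sigma, Nat.mem_primesBelow, Finset.mem_filter, Nat.mem_primesBelow] at hpq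
    dsimp only at hpq ⊢
    obtain ⟨⟨hpy, hp⟩, ⟨hqX, hq⟩, hpq⟩ := hpq
    rw [Finset.mem_coe, Finset.mem_filter, Finset.mem_Icc]
    have hp0 : 0 < p := hp.pos
    have hq0 : 0 < q := hq.pos
    refine ⟨⟨by nlinarith, ?_⟩, ?_⟩
    · calc p * q ≤ p * (X / p) := Nat.mul_le_mul_left p (by omega)
        _ = X / p * p := by ring
        _ ≤ X := Nat.div_mul_le_self X p
    · have hperm := (Nat.perm_primeFactorsList_mul hp0.ne' hq0.ne').length_eq
      rw [hperm, List.length_append, Nat.primeFactorsList_prime hp, Nat.primeFactorsList_prime hq]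
      simp
  · rintro ⟨p, q⟩ hpq ⟨p', q'⟩ hpq' heq
    simp only [Finset.coe_sigma, Set.mem_sigma_iff, Finset.mem_coe, Finset.mem_filter,
      Nat.mem_primesBelow] at hpq hpq'
    dsimp only at hpq hpq' heq
    obtain ⟨⟨hpy, hp⟩, ⟨hqX, hq⟩, hlt⟩ := hpq
    obtain ⟨⟨hpy', hp'⟩, ⟨hqX', hq'⟩, hlt'⟩ := hpq'
    have hmin : ∀ (a b : ℕ), a.Prime → b.Prime → a < b → (a * b).minFac = a := by
      intro a b ha hb hab
      have h1 : (a * b).minFac ≤ a := Nat.minFac_le_of_dvd ha.two_le ⟨b, rfl⟩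
      have h2 : (a * b).minFac.Prime := Nat.minFac_prime (by
        have := ha.two_le; have := hb.two_le; nlinarith)
      have hdvd : (a * b).minFac ∣ a * b := Nat.minFac_dvd _
      rcases (Nat.Prime.dvd_mul h2).1 hdvd with h | h
      · exact (Nat.prime_dvd_prime_iff_eq h2 ha).1 h
      · have := (Nat.prime_dvd_prime_iff_eq h2 hb).1 h
        omega
    have hpp : p = p' := by
      have h1 := hmin p q hp hq hlt
      have h2 := hmin p' q' hp' hq' hlt'
      rw [heq] at h1
      rw [h1] at h2
      exact h2
    subst hpp
    have hqq : q = q' := Nat.eq_of_mul_eq_mul_left hp.pos heq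
    simp [hqq]

lemma primesBelow_card_le (n : ℕ) : (n + 1).primesBelow.card ≤ n := by
  calc (n + 1).primesBelow.card ≤ (Finset.Icc 1 n).card := by
        apply Finset.card_le_card
        intro q hq
        rw [Nat.mem_primesBelow] at hq
        exact Finset.mem_Icc.2 ⟨hq.2.pos, by omega⟩
    _ = n := by rw [Nat.card_Icc]; omega

lemma filter_card_lower (M p : ℕ) :
    ((M + 1).primesBelow.card : ℝ) - p ≤
      (((M + 1).primesBelow.filter (fun q => p < q)).card : ℝ) := by
  have h := Finset.card_filter_add_card_filter_not
    (s := (M + 1).primesBelow) (p := fun q => p < q)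
  have h2 : ((M + 1).primesBelow.filter (fun q => ¬ p < q)).card ≤ p := by
    calc ((M + 1).primesBelow.filter (fun q => ¬ p < q)).card
        ≤ ((p + 1).primesBelow).card := by
          apply Finset.card_le_card
          intro q hq
          rw [Finset.mem_filter, Nat.mem_primesBelow] at hq
          exact Nat.mem_primesBelow.2 ⟨by omega, hq.1.2⟩
      _ ≤ p := primesBelow_card_le p
  have h3 : ((M + 1).primesBelow.card : ℕ) ≤
      ((M + 1).primesBelow.filter (fun q => p < q)).card + p := by omega
  have h4 := (Nat.cast_le (α := ℝ)).2 h3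
  push_cast at h4
  linarith

lemma per_p (X p y : ℕ) (hp : p ∈ (y + 1).primesBelow) (hy : 16 ≤ y)
    (hy4 : y * y * y * y ≤ X) (hL1 : 1 ≤ Real.log X) :
    (X : ℝ) * Real.log 2 / Real.log X * (1 / p) - (4 + y) ≤
      (((X / p + 1).primesBelow.filter (fun q => p < q)).card : ℝ) := by
  rw [Nat.mem_primesBelow] at hp
  obtain ⟨hpy, hpp⟩ := hp
  have hp2 : 2 ≤ p := hpp.two_le
  set M := X / p with hM
  have hMy : y * y * y ≤ M := by
    calc y * y * y = y * y * y * y / y := by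
          rw [Nat.mul_div_cancel _ (by omega)]
      _ ≤ X / y := Nat.div_le_div_right hy4
      _ ≤ X / p := Nat.div_le_div_left (by omega) (by omega)
  have hM2 : 2 ≤ M := by nlinarith
  have hcheb := cheb_real M hM2
  have hfc := filter_card_lower M p
  -- (M:ℝ) ≥ X/p - 1
  have hMX : (X : ℝ) / p - 1 ≤ (M : ℝ) := by
    have hlt : X < (M + 1) * p := (Nat.div_lt_iff_lt_mul (show 0 < p by omega)).1 (by omega)
    have hlt' : (X : ℝ) < ((M : ℝ) + 1) * p := by exact_mod_cast hlt
    have hp0 : (0:ℝ) < p := by positivity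
    rw [sub_le_iff_le_add, div_le_iff₀ hp0]
    nlinarith
  have hMle : (M : ℝ) ≤ X := by
    have : M ≤ X := Nat.div_le_self X p
    exact_mod_cast this
  have hlogM : 0 < Real.log M := Real.log_pos (by exact_mod_cast hM2)
  have hlogMle : Real.log M ≤ Real.log X := Real.log_le_log (by positivity) hMle
  have hlog2 : 0 < Real.log 2 := Real.log_pos (by norm_num)
  have hlog2le1 : Real.log 2 ≤ 1 := by
    calc Real.log 2 ≤ 2 - 1 := by
          have := Real.add_one_le_exp (Real.log 2)
          nlinarith [Real.exp_log (show (0:ℝ) < 2 by norm_num)]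
      _ = 1 := by norm_num
  have hXp1 : (0:ℝ) ≤ (X : ℝ) / p - 1 := by
    have : (p : ℝ) ≤ X := by
      have hpX : p ≤ X := by
        calc p ≤ y := by omega
          _ ≤ y * y * y * y := Nat.le_mul_of_pos_left y (by positivity)
          _ ≤ X := hy4
      exact_mod_cast hpX
    rw [sub_nonneg, le_div_iff₀ (by positivity)]
    linarith
  have key : ((X : ℝ) / p - 1) * Real.log 2 / Real.log X ≤
      (M : ℝ) * Real.log 2 / Real.log M := by
    apply div_le_div₀ (by positivity) (by nlinarith) hlogM hlogMle
  have hL0 : (0:ℝ) < Real.log X := by linarith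
  have expand : ((X : ℝ) / p - 1) * Real.log 2 / Real.log X
      = (X : ℝ) * Real.log 2 / Real.log X * (1 / p) - Real.log 2 / Real.log X := by
    field_simp
  have hsmall : Real.log 2 / Real.log X ≤ 1 := by
    rw [div_le_one hL0]; linarith
  have hpy' : (p : ℝ) ≤ y := by exact_mod_cast (by omega : p ≤ y)
  calc (X : ℝ) * Real.log 2 / Real.log X * (1 / p) - (4 + y)
      ≤ ((X : ℝ) / p - 1) * Real.log 2 / Real.log X - 3 - p := by
        rw [expand]; linarith
    _ ≤ (M : ℝ) * Real.log 2 / Real.log M - 3 - p := by linarith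
    _ ≤ ((M + 1).primesBelow.card : ℝ) - p := by linarith
    _ ≤ _ := hfc

lemma ytendsto : Tendsto (fun X : ℕ => Nat.sqrt (Nat.sqrt X)) atTop atTop := by
  rw [tendsto_atTop_atTop]
  intro b
  refine ⟨b * b * (b * b), fun a ha => ?_⟩
  exact Nat.le_sqrt.2 (Nat.le_sqrt.2 (by nlinarith))

lemma Ltendsto : Tendsto (fun X : ℕ => Real.log X) atTop atTop :=
  Real.tendsto_log_atTop.comp tendsto_natCast_atTop_atTop

lemma LLtendsto : Tendsto (fun X : ℕ => Real.log (Real.log X)) atTop atTop :=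
  Real.tendsto_log_atTop.comp Ltendsto

lemma ev4 : ∀ᶠ X : ℕ in atTop, Real.log X ≤ Real.log 2 / 8 * Real.sqrt X := by
  have hlo := isLittleO_log_rpow_atTop (show (0:ℝ) < 1/2 by norm_num)
  have hb := hlo.bound (show (0:ℝ) < Real.log 2 / 8 by
    have := Real.log_pos (show (1:ℝ) < 2 by norm_num); positivity)
  have hev : ∀ᶠ x : ℝ in atTop, Real.log x ≤ Real.log 2 / 8 * Real.sqrt x := by
    filter_upwards [hb, eventually_ge_atTop (1:ℝ)] with x hx hx1
    have h0 : (0:ℝ) ≤ x := by linarith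
    have hnorm : ‖x ^ ((1:ℝ)/2)‖ = Real.sqrt x := by
      rw [Real.norm_eq_abs, abs_of_nonneg (Real.rpow_nonneg h0 _), Real.sqrt_eq_rpow]
    calc Real.log x ≤ ‖Real.log x‖ := le_abs_self _
      _ ≤ Real.log 2 / 8 * ‖x ^ ((1:ℝ)/2)‖ := hx
      _ = Real.log 2 / 8 * Real.sqrt x := by rw [hnorm]
  exact tendsto_natCast_atTop_atTop.eventually hev

lemma main_lower : ∀ᶠ X : ℕ in atTop,
    Real.log 2 / 4 * ((X : ℝ) / Real.log X * Real.log (Real.log X)) ≤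
      (((Finset.Icc 1 X).filter (fun a => a.primeFactorsList.length ≤ 2)).card : ℝ) := by
  filter_upwards [ytendsto.eventually_ge_atTop 16,
    Ltendsto.eventually_ge_atTop (8 * Real.log 2 + 1),
    LLtendsto.eventually_ge_atTop (2 * (Real.log 8 + 1)), ev4] with X hy hLge hLLge h4
  set y := Nat.sqrt (Nat.sqrt X) with hydef
  set L := Real.log X with hLdef
  set LL := Real.log L with hLLdef
  set P := (y + 1).primesBelow with hPdef
  set S := ∑ p ∈ P, (1 / p : ℝ) with hSdef
  have hlog2 : 0 < Real.log 2 := Real.log_pos (by norm_num)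
  have hlog8 : 0 ≤ Real.log 8 := Real.log_nonneg (by norm_num)
  have hL0 : (0:ℝ) < L := by linarith
  have hL1 : (1:ℝ) ≤ L := by linarith
  have hLL1 : (1:ℝ) ≤ LL := by linarith
  have hy4 : y * y * y * y ≤ X := by
    have a1 : y * y ≤ Nat.sqrt X := Nat.sqrt_le (Nat.sqrt X)
    have a2 : Nat.sqrt X * Nat.sqrt X ≤ X := Nat.sqrt_le X
    calc y * y * y * y = (y * y) * (y * y) := by ring
      _ ≤ Nat.sqrt X * Nat.sqrt X := Nat.mul_le_mul a1 a1
      _ ≤ X := a2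
  have hX1 : (1:ℕ) ≤ X := by
    calc (1:ℕ) ≤ y := by omega
      _ ≤ y * y * y * y := Nat.le_mul_of_pos_left y (by positivity)
      _ ≤ X := hy4
  have hX0 : (0:ℝ) < X := by exact_mod_cast Nat.lt_of_lt_of_le Nat.zero_lt_one hX1
  -- upper bound on X in terms of y
  have hXlt : X < (2 * y) * (2 * y) * ((2 * y) * (2 * y)) := by
    have b1 : Nat.sqrt X < (y + 1) * (y + 1) := Nat.lt_succ_sqrt (Nat.sqrt X)
    have b2 : X < (Nat.sqrt X + 1) * (Nat.sqrt X + 1) := Nat.lt_succ_sqrt X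
    have b3 : Nat.sqrt X + 1 ≤ (y + 1) * (y + 1) := by omega
    have b4 : (y + 1) * (y + 1) ≤ (2 * y) * (2 * y) := by nlinarith
    calc X < (Nat.sqrt X + 1) * (Nat.sqrt X + 1) := b2
      _ ≤ ((y + 1) * (y + 1)) * ((y + 1) * (y + 1)) := Nat.mul_le_mul b3 b3
      _ ≤ (2 * y) * (2 * y) * ((2 * y) * (2 * y)) := Nat.mul_le_mul b4 b4
  -- log y lower bound
  have hy0 : (0:ℝ) < y := by exact_mod_cast (by omega : 0 < y)
  have hlogy : L / 4 - Real.log 2 ≤ Real.log y := by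
    have c1 : (X : ℝ) ≤ ((2 * y : ℕ) : ℝ) ^ (4 : ℕ) := by
      have := hXlt
      have c2 : X ≤ (2 * y) * (2 * y) * ((2 * y) * (2 * y)) := le_of_lt this
      have c3 := (Nat.cast_le (α := ℝ)).2 c2
      push_cast at c3 ⊢
      nlinarith [c3]
    have c4 : L ≤ Real.log (((2 * y : ℕ) : ℝ) ^ (4 : ℕ)) := Real.log_le_log hX0 c1
    rw [Real.log_pow] at c4
    have c5 : Real.log ((2 * y : ℕ) : ℝ) = Real.log 2 + Real.log y := by
      push_cast
      rw [Real.log_mul (by norm_num) (by positivity)]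
    rw [c5] at c4
    push_cast at c4
    linarith
  -- Mertens lower bound on S
  have hS : LL / 2 ≤ S := by
    have m1 := mertens y (by omega)
    have m2 : Real.log (L / 8) ≤ Real.log (Real.log y) := by
      apply Real.log_le_log (by positivity)
      linarith
    have m3 : Real.log (L / 8) = LL - Real.log 8 := by
      rw [Real.log_div (by positivity) (by norm_num)]
    rw [m3] at m2
    have : S ≥ LL - Real.log 8 - 1 := by
      rw [hSdef, hPdef]
      linarith [m1, m2]
    linarith
  -- summing per-p bounds
  have hsum : ((X : ℝ) * Real.log 2 / L) * S - (y : ℝ) * (4 + y) ≤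
      ∑ p ∈ P, ((((X / p + 1).primesBelow.filter (fun q => p < q)).card : ℝ)) := by
    have s1 : ∑ p ∈ P, ((X : ℝ) * Real.log 2 / L * (1 / p) - (4 + y)) ≤
        ∑ p ∈ P, ((((X / p + 1).primesBelow.filter (fun q => p < q)).card : ℝ)) :=
      Finset.sum_le_sum fun p hp => per_p X p y hp hy hy4 hL1
    have s2 : ∑ p ∈ P, ((X : ℝ) * Real.log 2 / L * (1 / p) - (4 + y))
        = ((X : ℝ) * Real.log 2 / L) * S - (P.card : ℝ) * (4 + y) := by
      rw [Finset.sum_sub_distrib, Finset.sum_const, ← Finset.mul_sum, hSdef]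
      push_cast
      ring
    have s3 : (P.card : ℝ) ≤ y := by
      exact_mod_cast primesBelow_card_le y
    have s4 : (0:ℝ) ≤ 4 + (y : ℝ) := by positivity
    nlinarith [s1, s2.symm.le, s2.le]
  -- from injection
  have hcount : (∑ p ∈ P, ((((X / p + 1).primesBelow.filter (fun q => p < q)).card : ℝ)))
      ≤ (((Finset.Icc 1 X).filter (fun a => a.primeFactorsList.length ≤ 2)).card : ℝ) := by
    have := (Nat.cast_le (α := ℝ)).2 (count_lower X y)
    push_cast at this
    exact this
  -- tail bound
  have htail : (y : ℝ) * (4 + y) ≤ 2 * Real.sqrt X := by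
    have t1 : (4:ℝ) + y ≤ 2 * y := by
      have : (16:ℝ) ≤ y := by exact_mod_cast hy
      linarith
    have t2 : (y : ℝ) * (y : ℝ) ≤ Real.sqrt X := by
      have a1 : y * y ≤ Nat.sqrt X := Nat.sqrt_le (Nat.sqrt X)
      have a1' : ((y : ℝ)) * y ≤ (Nat.sqrt X : ℝ) := by exact_mod_cast a1
      have a2 : (Nat.sqrt X : ℝ) ≤ Real.sqrt X := by
        rw [show (Nat.sqrt X : ℝ) = Real.sqrt ((Nat.sqrt X : ℝ) ^ 2) from
          (Real.sqrt_sq (by positivity)).symm]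
        apply Real.sqrt_le_sqrt
        have := Nat.sqrt_le' X
        exact_mod_cast this
      linarith
    nlinarith
  -- final
  have hfin : ((X : ℝ) * Real.log 2 / L) * S - 2 * Real.sqrt X ≤
      (((Finset.Icc 1 X).filter (fun a => a.primeFactorsList.length ≤ 2)).card : ℝ) := by
    linarith
  have hmain : ((X : ℝ) * Real.log 2 / L) * (LL / 2) - 2 * Real.sqrt X ≤
      (((Finset.Icc 1 X).filter (fun a => a.primeFactorsList.length ≤ 2)).card : ℝ) := by
    have : ((X : ℝ) * Real.log 2 / L) * (LL / 2) ≤ ((X : ℝ) * Real.log 2 / L) * S := by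
      apply mul_le_mul_of_nonneg_left (by linarith) (by positivity)
    linarith
  have hsq : Real.sqrt X * Real.sqrt X = X := Real.mul_self_sqrt hX0.le
  have hsqrt0 : (0:ℝ) ≤ Real.sqrt X := Real.sqrt_nonneg _
  have hXL : (0:ℝ) ≤ (X:ℝ) / L := by positivity
  have key : 2 * Real.sqrt X ≤ Real.log 2 / 4 * ((X:ℝ) / L) := by
    rw [show Real.log 2 / 4 * ((X:ℝ) / L) = (X:ℝ) * Real.log 2 / 4 / L by ring]
    rw [le_div_iff₀ hL0]
    calc 2 * Real.sqrt X * L ≤ 2 * Real.sqrt X * (Real.log 2 / 8 * Real.sqrt X) := by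
          apply mul_le_mul_of_nonneg_left h4 (by positivity)
      _ = (Real.sqrt X * Real.sqrt X) * Real.log 2 / 4 := by ring
      _ = (X:ℝ) * Real.log 2 / 4 := by rw [hsq]
  have expand : ((X : ℝ) * Real.log 2 / L) * (LL / 2)
      = Real.log 2 / 2 * ((X:ℝ) / L * LL) := by ring
  have last : Real.log 2 / 4 * ((X:ℝ) / L * LL) + 2 * Real.sqrt X ≤
      Real.log 2 / 2 * ((X:ℝ) / L * LL) := by
    have k1 : 2 * Real.sqrt X ≤ Real.log 2 / 4 * ((X:ℝ) / L * LL) := by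
      calc 2 * Real.sqrt X ≤ Real.log 2 / 4 * ((X:ℝ) / L) := key
        _ ≤ Real.log 2 / 4 * ((X:ℝ) / L * LL) := by nlinarith
    linarith
  rw [expand] at hmain
  linarith

theorem stmt_12 :
    (∃ c : ℝ, 0 < c ∧ ∀ᶠ X : ℕ in Filter.atTop,
      c * ((X : ℝ) / Real.log X * Real.log (Real.log X)) ≤
        (((Finset.Icc 1 X).filter (fun a => a.primeFactorsList.length ≤ 2)).card : ℝ)) ∧
    Filter.Tendsto
      (fun X : ℕ =>
        (((Finset.Icc 1 X).filter (fun a => a.primeFactorsList.length ≤ 2)).card : ℝ) /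
          ((X : ℝ) / Real.log X))
      Filter.atTop Filter.atTop := by
  have hlog2 : 0 < Real.log 2 := Real.log_pos (by norm_num)
  have hc : 0 < Real.log 2 / 4 := by positivity
  constructor
  · exact ⟨Real.log 2 / 4, hc, main_lower⟩
  · apply tendsto_atTop_mono' atTop ?_ (Tendsto.const_mul_atTop hc LLtendsto)
    filter_upwards [main_lower, Ltendsto.eventually_gt_atTop 0,
      tendsto_natCast_atTop_atTop.eventually_gt_atTop (0:ℝ)] with X hmain hL hX
    have hXL : (0:ℝ) < (X:ℝ) / Real.log X := by positivity
    rw [le_div_iff₀ hXL]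
    calc Real.log 2 / 4 * Real.log (Real.log X) * ((X:ℝ) / Real.log X)
        = Real.log 2 / 4 * ((X:ℝ) / Real.log X * Real.log (Real.log X)) := by ring
      _ ≤ _ := hmain
end

section
/- For every integer K ≥ 3, with X = π(4K), the number of positive integers a ≤ X not in A_4 = {π(4k) : k ∈ ℤ⁺} equals 1 + |{1 ≤ k < K : π(4k+4) − π(4k) = 2}|. -/
private lemma pi_succ' (n : ℕ) : Nat.primeCounting (n+1) =
    Nat.primeCounting n + if Nat.Prime (n+1) then 1 else 0 := by
  simp [Nat.primeCounting, Nat.primeCounting', Nat.count_succ]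

private lemma not_prime_even {n : ℕ} (h2 : 2 < n) (he : 2 ∣ n) : ¬ Nat.Prime n := by
  intro hp
  rcases (Nat.Prime.eq_one_or_self_of_dvd hp 2 he) with h | h <;> omega

private lemma gap_le (k : ℕ) (hk : 1 ≤ k) :
    Nat.primeCounting (4*k+4) ≤ Nat.primeCounting (4*k) + 2 := by
  have h2 : ¬ Nat.Prime (4*k+2) := not_prime_even (by omega) ⟨2*k+1, by ring⟩
  have h4 : ¬ Nat.Prime (4*k+4) := not_prime_even (by omega) ⟨2*k+2, by ring⟩
  have a1 := pi_succ' (4*k)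
  have a2 := pi_succ' (4*k+1)
  have a3 := pi_succ' (4*k+2)
  have a4 := pi_succ' (4*k+3)
  have e2 : 4*k+1+1 = 4*k+2 := by ring
  have e3 : 4*k+2+1 = 4*k+3 := by ring
  have e4 : 4*k+3+1 = 4*k+4 := by ring
  rw [e2] at a2; rw [e3] at a3; rw [e4] at a4
  rw [if_neg h2] at a2; rw [if_neg h4] at a4
  split_ifs at a1 a3 <;> omega

private lemma pi_mono4 {a b : ℕ} (h : a ≤ b) :
    Nat.primeCounting (4*a) ≤ Nat.primeCounting (4*b) :=
  Nat.monotone_primeCounting (by omega)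

private lemma pi_ge_two {k : ℕ} (hk : 1 ≤ k) : 2 ≤ Nat.primeCounting (4*k) := by
  have := pi_mono4 hk
  have h4 : Nat.primeCounting (4*1) = 2 := by decide
  omega

/-- If the interval `(4K, 4K+4]` contains two primes, the value `π(4K)+1` is skipped. -/
private lemma skipped {K : ℕ} (hK : 1 ≤ K)
    (hg : Nat.primeCounting (4*K+4) = Nat.primeCounting (4*K) + 2) :
    Nat.primeCounting (4*K) + 1 ∉ {m : ℕ | ∃ k : ℕ, 0 < k ∧ Nat.primeCounting (4 * k) = m} := by
  rintro ⟨k, hk, he⟩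
  rcases le_or_gt k K with h | h
  · have := pi_mono4 h; omega
  · have := pi_mono4 (show K + 1 ≤ k by omega)
    have e : 4 * (K+1) = 4*K+4 := by ring
    rw [e, hg] at this
    omega

open Classical in
theorem stmt_15 (K : ℕ) (hK : 3 ≤ K) :
    ((Finset.Icc 1 (Nat.primeCounting (4 * K))).filter
        (fun a => a ∉ {m : ℕ | ∃ k : ℕ, 0 < k ∧ Nat.primeCounting (4 * k) = m})).card =
      1 + ((Finset.Ico 1 K).filter
          (fun k => Nat.primeCounting (4 * k + 4) - Nat.primeCounting (4 * k) = 2)).card := by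
  induction K, hK using Nat.le_induction with
  | base =>
    have h1 : (1:ℕ) ∉ {m : ℕ | ∃ k : ℕ, 0 < k ∧ Nat.primeCounting (4 * k) = m} := by
      rintro ⟨k, hk, he⟩; have := pi_ge_two hk; omega
    have h3 : (3:ℕ) ∉ {m : ℕ | ∃ k : ℕ, 0 < k ∧ Nat.primeCounting (4 * k) = m} := by
      rintro ⟨k, hk, he⟩
      rcases Nat.lt_or_ge k 2 with h | h
      · have hk1 : k = 1 := by omega
        rw [hk1] at he
        have : Nat.primeCounting (4*1) = 2 := by decide
        omega
      · have := pi_mono4 h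
        have : Nat.primeCounting (4*2) = 4 := by decide
        omega
    have hπ : Nat.primeCounting (4 * 3) = 5 := by decide
    rw [hπ]
    have hset : ((Finset.Icc 1 5).filter
        (fun a => a ∉ {m : ℕ | ∃ k : ℕ, 0 < k ∧ Nat.primeCounting (4 * k) = m})) = {1, 3} := by
      ext a
      simp only [Finset.mem_filter, Finset.mem_Icc, Finset.mem_insert, Finset.mem_singleton]
      constructor
      · rintro ⟨⟨h1a, ha5⟩, hna⟩
        interval_cases a
        · left; rfl
        · exact absurd ⟨1, by norm_num, by decide⟩ hna
        · right; rfl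
        · exact absurd ⟨2, by norm_num, by decide⟩ hna
        · exact absurd ⟨3, by norm_num, by decide⟩ hna
      · rintro (rfl | rfl)
        · exact ⟨by norm_num, h1⟩
        · exact ⟨by norm_num, h3⟩
    rw [hset]
    rw [show ((Finset.Ico 1 3).filter
        (fun k => Nat.primeCounting (4 * k + 4) - Nat.primeCounting (4 * k) = 2))
        = Finset.filter (fun k => Nat.primeCounting (4 * k + 4) - Nat.primeCounting (4 * k) = 2)
          (Finset.Ico 1 3) from Finset.filter_congr_decidable ..]
    decide
  | succ K hK3 ih =>
    have hK1 : 1 ≤ K := by omega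
    set A := {m : ℕ | ∃ k : ℕ, 0 < k ∧ Nat.primeCounting (4 * k) = m} with hA
    set X := Nat.primeCounting (4 * K) with hX
    have hX2 : 2 ≤ X := pi_ge_two hK1
    have e4 : 4 * (K + 1) = 4 * K + 4 := by ring
    have hmono : X ≤ Nat.primeCounting (4 * K + 4) := by
      have := pi_mono4 (show K ≤ K + 1 by omega); rw [e4] at this; exact this
    have hle2 : Nat.primeCounting (4 * K + 4) ≤ X + 2 := gap_le K hK1
    -- split the Icc
    have hmono' : X ≤ Nat.primeCounting (4 * (K + 1)) := by rw [e4]; exact hmono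
    have hsplit : Finset.Icc 1 (Nat.primeCounting (4 * (K + 1)))
        = Finset.Icc 1 X ∪ Finset.Ioc X (Nat.primeCounting (4 * (K + 1))) := by
      ext a
      simp only [Finset.mem_Icc, Finset.mem_union, Finset.mem_Ioc]
      omega
    have hdisj : Disjoint
        ((Finset.Icc 1 X).filter (fun a => a ∉ A))
        ((Finset.Ioc X (Nat.primeCounting (4 * (K + 1)))).filter (fun a => a ∉ A)) := by
      apply Finset.disjoint_left.mpr
      intro a ha hb
      simp only [Finset.mem_filter, Finset.mem_Icc, Finset.mem_Ioc] at ha hb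
      omega
    rw [hsplit, Finset.filter_union, Finset.card_union_of_disjoint hdisj, ih]
    -- split the Ico
    have hIco : Finset.Ico 1 (K + 1) = insert K (Finset.Ico 1 K) := by
      ext a
      simp only [Finset.mem_insert, Finset.mem_Ico]
      omega
    rw [hIco, Finset.filter_insert]
    -- key claim
    have key : ((Finset.Ioc X (Nat.primeCounting (4 * (K + 1)))).filter (fun a => a ∉ A)).card
        = if Nat.primeCounting (4 * K + 4) - Nat.primeCounting (4 * K) = 2 then 1 else 0 := by
      rcases (show Nat.primeCounting (4 * K + 4) = X ∨ Nat.primeCounting (4 * K + 4) = X + 1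
          ∨ Nat.primeCounting (4 * K + 4) = X + 2 by omega) with hg | hg | hg
      · rw [if_neg (by omega)]
        rw [e4, hg]
        simp
      · rw [if_neg (by omega)]
        rw [e4, hg]
        have hIoc : Finset.Ioc X (X + 1) = {X + 1} := by
          ext a; simp only [Finset.mem_Ioc, Finset.mem_singleton]; omega
        rw [hIoc, Finset.filter_singleton, if_neg]
        · simp
        · simp only [not_not]
          exact ⟨K + 1, by omega, by rw [e4, hg]⟩
      · rw [if_pos (by omega)]
        rw [e4, hg]
        have hIoc : Finset.Ioc X (X + 2) = {X + 1, X + 2} := by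
          ext a
          simp only [Finset.mem_Ioc, Finset.mem_insert, Finset.mem_singleton]
          omega
        rw [hIoc]
        rw [Finset.filter_insert, Finset.filter_singleton]
        rw [if_pos (skipped hK1 (by omega)), if_neg]
        · simp
        · simp only [not_not]
          exact ⟨K + 1, by omega, by rw [e4, hg]⟩
    rw [key]
    split_ifs with h
    · rw [Finset.card_insert_of_notMem (by simp)]
      omega
    · omega
end
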